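/- Let k ∈ ℕ with 1 ≤ k ≤ min(n_k, n_l). Then the number of overlapping pre-averaging windows satisfies #{(i,j) : 0 ≤ i ≤ n_k − k, 0 ≤ j ≤ n_l − k and (t_i, t_{i+k}] ∩ (s_j, s_{j+k}] ≠ ∅} ≤ (n_k + 1)·(M²·k·(n_l/n_k + 1) + 1). -/

import Mathlib

open Set
open scoped Classical

/-- Counting lemma: a finite set of naturals contained in an open real interval
of length `L` has at most `L + 1` elements. -/
lemma count_in_interval (S : Finset ℕ) (a L : ℝ) (hL : 0 ≤ L)
    (h : ∀ j ∈ S, a < j ∧ (j : ℝ) < a + L) : (S.card : ℝ) ≤ L + 1 := by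
  rcases S.eq_empty_or_nonempty with rfl | hne
  · simpa using by linarith
  · set m := S.min' hne with hm_def
    have hm := S.min'_mem hne
    have hsub : S ⊆ Finset.Icc m (m + ⌊L⌋₊) := by
      intro j hj
      rw [Finset.mem_Icc]
      refine ⟨S.min'_le j hj, ?_⟩
      have h1 := h j hj
      have h2 := h m hm
      have hle : m ≤ j := S.min'_le j hj
      have hfl : j - m ≤ ⌊L⌋₊ := by
        apply Nat.le_floor
        push_cast [Nat.cast_sub hle]
        linarith [h1.2, h2.1]
      omega
    have hcard : S.card ≤ ⌊L⌋₊ + 1 := by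
      have := Finset.card_le_card hsub
      rw [Nat.card_Icc] at this
      omega
    calc (S.card : ℝ) ≤ (⌊L⌋₊ : ℝ) + 1 := by exact_mod_cast hcard
      _ ≤ L + 1 := by linarith [Nat.floor_le hL]

/-- The Hayashi–Yoshida sum with window length `k` over two comparable
time-transformed grids contains at most `(n_k+1)·(M²·k·(n_l/n_k + 1) + 1)`
non-zero summands. -/
theorem stmt_3 (M : ℝ) (hM : 1 < M) (nk nl : ℕ) (hnk : 1 ≤ nk) (hnl : 1 ≤ nl)
    (f f' φ φ' : ℝ → ℝ)
    (hfmono : StrictMonoOn f (Icc 0 1)) (hφmono : StrictMonoOn φ (Icc 0 1))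
    (hfbij : Set.BijOn f (Icc 0 1) (Icc 0 1)) (hφbij : Set.BijOn φ (Icc 0 1) (Icc 0 1))
    (hf0 : f 0 = 0) (hf1 : f 1 = 1) (hφ0 : φ 0 = 0) (hφ1 : φ 1 = 1)
    (hfderiv : ∀ x ∈ Icc (0:ℝ) 1, HasDerivWithinAt f (f' x) (Icc 0 1) x)
    (hφderiv : ∀ x ∈ Icc (0:ℝ) 1, HasDerivWithinAt φ (φ' x) (Icc 0 1) x)
    (hfcont : ContinuousOn f' (Icc 0 1)) (hφcont : ContinuousOn φ' (Icc 0 1))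
    (hflb : ∀ x ∈ Icc (0:ℝ) 1, M⁻¹ < f' x) (hfub : ∀ x ∈ Icc (0:ℝ) 1, f' x < M)
    (hφlb : ∀ x ∈ Icc (0:ℝ) 1, M⁻¹ < φ' x) (hφub : ∀ x ∈ Icc (0:ℝ) 1, φ' x < M)
    (t s : ℕ → ℝ)
    (ht : ∀ i ≤ nk, t i ∈ Icc (0:ℝ) 1 ∧ f (t i) = i / nk)
    (hs : ∀ j ≤ nl, s j ∈ Icc (0:ℝ) 1 ∧ φ (s j) = j / nl)
    (k : ℕ) (hk1 : 1 ≤ k) (hk2 : k ≤ min nk nl) :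
    ((((Finset.range (nk - k + 1)) ×ˢ (Finset.range (nl - k + 1))).filter
        (fun p => (Set.Ioc (t p.1) (t (p.1 + k)) ∩ Set.Ioc (s p.2) (s (p.2 + k))).Nonempty)).card : ℝ)
      ≤ ((nk : ℝ) + 1) * (M ^ 2 * k * ((nl : ℝ) / nk + 1) + 1) := by
  have hMpos : (0:ℝ) < M := lt_trans one_pos hM
  have hnkpos : (0:ℝ) < nk := by exact_mod_cast hnk
  have hnlpos : (0:ℝ) < nl := by exact_mod_cast hnl
  have hkK : k ≤ nk := le_trans hk2 (min_le_left _ _)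
  have hkL : k ≤ nl := le_trans hk2 (min_le_right _ _)
  -- φ is M-Lipschitz
  have hφlip : ∀ x ∈ Icc (0:ℝ) 1, ∀ y ∈ Icc (0:ℝ) 1, x ≤ y → φ y - φ x ≤ M * (y - x) := by
    intro x hx y hy hxy
    have := Convex.norm_image_sub_le_of_norm_hasDerivWithin_le (C := M) hφderiv
      (fun z hz => by
        rw [Real.norm_eq_abs, abs_le]
        have h1 := hφlb z hz; have h2 := hφub z hz
        have : (0:ℝ) < M⁻¹ := inv_pos.mpr hMpos
        constructor <;> linarith)
      (convex_Icc 0 1) hx hy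
    rw [Real.norm_eq_abs, Real.norm_eq_abs, abs_of_nonneg (sub_nonneg.mpr hxy)] at this
    exact le_trans (le_abs_self _) this
  -- lower bound: y - x ≤ M * (f y - f x)
  have hflow : ∀ x ∈ Icc (0:ℝ) 1, ∀ y ∈ Icc (0:ℝ) 1, x ≤ y → y - x ≤ M * (f y - f x) := by
    have hg : MonotoneOn (fun x => M * f x - x) (Icc (0:ℝ) 1) := by
      apply monotoneOn_of_hasDerivWithinAt_nonneg (convex_Icc 0 1)
        (f' := fun x => M * f' x - 1)
      · intro x hx
        exact (((hfderiv x hx).const_mul M).sub (hasDerivWithinAt_id x _)).continuousWithinAt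
      · intro x hx
        exact (((hfderiv x (interior_subset hx)).mono interior_subset).const_mul M).sub
          (hasDerivWithinAt_id x _)
      · intro x hx
        have h1 := hflb x (interior_subset hx)
        have h2 : M * M⁻¹ = 1 := mul_inv_cancel₀ (ne_of_gt hMpos)
        nlinarith
    intro x hx y hy hxy
    have := hg hx hy hxy
    simp only at this
    linarith
  set P : ℕ × ℕ → Prop :=
    fun p => (Set.Ioc (t p.1) (t (p.1 + k)) ∩ Set.Ioc (s p.2) (s (p.2 + k))).Nonempty with hP
  set F := ((Finset.range (nk - k + 1)) ×ˢ (Finset.range (nl - k + 1))).filter P with hF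
  set L : ℝ := (k:ℝ) + M ^ 2 * k * nl / nk with hLdef
  have hLnonneg : 0 ≤ L := by
    have : (0:ℝ) ≤ M ^ 2 * k * nl / nk := by positivity
    have hk' : (0:ℝ) ≤ k := Nat.cast_nonneg k
    rw [hLdef]; linarith
  -- key bound for each pair in F
  have key : ∀ p ∈ F, (nl : ℝ) * φ (t p.1) - k < p.2 ∧
      (p.2 : ℝ) < ((nl : ℝ) * φ (t p.1) - k) + L := by
    rintro ⟨i, j⟩ hp
    rw [hF, Finset.mem_filter, Finset.mem_product, Finset.mem_range, Finset.mem_range] at hp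
    obtain ⟨⟨hi, hj⟩, ⟨x, hx1, hx2⟩⟩ := hp
    have hik : i + k ≤ nk := by omega
    have hjk : j + k ≤ nl := by omega
    obtain ⟨hti, hfti⟩ := ht i (by omega)
    obtain ⟨htik, hftik⟩ := ht (i + k) hik
    obtain ⟨hsj, hφsj⟩ := hs j (by omega)
    obtain ⟨hsjk, hφsjk⟩ := hs (j + k) hjk
    -- t i < s (j+k) and s j < t (i+k)
    have h1 : t i < s (j + k) := lt_of_lt_of_le hx1.1 hx2.2
    have h2 : s j < t (i + k) := lt_of_lt_of_le hx2.1 hx1.2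
    have hφ1 : φ (t i) < ((j : ℝ) + k) / nl := by
      have := hφmono hti hsjk h1
      rwa [hφsjk, Nat.cast_add] at this
    have hφ2 : (j : ℝ) / nl < φ (t (i + k)) := by
      have := hφmono hsj htik h2
      rwa [hφsj] at this
    -- t i ≤ t (i+k)
    have htle : t i ≤ t (i + k) := by
      by_contra hcon
      push_neg at hcon
      have := hfmono htik hti hcon
      rw [hfti, hftik] at this
      have : ((i:ℝ) + k) / nk ≤ (i:ℝ) / nk := by push_cast at this ⊢; linarith
      have hkpos : (0:ℝ) < k := by exact_mod_cast hk1
      rw [div_le_div_iff_of_pos_right hnkpos] at this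
      linarith
    -- φ (t (i+k)) ≤ φ (t i) + M^2 * k / nk
    have hchain : φ (t (i + k)) - φ (t i) ≤ M ^ 2 * k / nk := by
      have hA := hφlip (t i) hti (t (i + k)) htik htle
      have hB := hflow (t i) hti (t (i + k)) htik htle
      have hfd : f (t (i + k)) - f (t i) = (k : ℝ) / nk := by
        rw [hfti, hftik]
        push_cast
        field_simp
        ring
      rw [hfd] at hB
      calc φ (t (i + k)) - φ (t i) ≤ M * (t (i + k) - t i) := hA
        _ ≤ M * (M * ((k:ℝ) / nk)) := by
            apply mul_le_mul_of_nonneg_left hB (le_of_lt hMpos)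
        _ = M ^ 2 * k / nk := by ring
    constructor
    · have : (nl:ℝ) * φ (t i) < (j:ℝ) + k := by
        have := mul_lt_mul_of_pos_left hφ1 hnlpos
        rwa [mul_div_cancel₀ _ (ne_of_gt hnlpos)] at this
      linarith
    · have hjlt : (j : ℝ) / nl < φ (t i) + M ^ 2 * k / nk := by linarith
      have : (j:ℝ) < nl * (φ (t i) + M ^ 2 * k / nk) := by
        have := mul_lt_mul_of_pos_left hjlt hnlpos
        rwa [mul_div_cancel₀ _ (ne_of_gt hnlpos)] at this
      have hexp : (nl:ℝ) * (φ (t i) + M ^ 2 * k / nk) = ((nl:ℝ) * φ (t i) - k) + L := by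
        rw [hLdef]; field_simp; ring
      linarith [hexp ▸ this]
  -- fiberwise counting
  have hcard_eq : F.card = ∑ i ∈ Finset.range (nk - k + 1),
      (F.filter (fun p => p.1 = i)).card := by
    apply Finset.card_eq_sum_card_fiberwise
    intro p hp
    rw [hF, Finset.mem_coe, Finset.mem_filter, Finset.mem_product] at hp
    exact hp.1.1
  have hfiber : ∀ i ∈ Finset.range (nk - k + 1),
      ((F.filter (fun p => p.1 = i)).card : ℝ) ≤ L + 1 := by
    intro i _
    set G := F.filter (fun p => p.1 = i) with hG
    have himg : G.card = (G.image Prod.snd).card := by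
      rw [Finset.card_image_of_injOn]
      intro p hp q hq hpq
      have hp' := Finset.mem_filter.mp (Finset.mem_coe.mp hp)
      have hq' := Finset.mem_filter.mp (Finset.mem_coe.mp hq)
      exact Prod.ext (hp'.2.trans hq'.2.symm) hpq
    rw [himg]
    apply count_in_interval _ ((nl : ℝ) * φ (t i) - k) L hLnonneg
    intro j hj
    rw [Finset.mem_image] at hj
    obtain ⟨p, hp, rfl⟩ := hj
    rw [hG, Finset.mem_filter] at hp
    have := key p hp.1
    rw [hp.2] at this
    exact this
  calc (F.card : ℝ) = ∑ i ∈ Finset.range (nk - k + 1),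
        ((F.filter (fun p => p.1 = i)).card : ℝ) := by rw [hcard_eq]; push_cast; rfl
    _ ≤ ∑ _i ∈ Finset.range (nk - k + 1), (L + 1) := Finset.sum_le_sum hfiber
    _ = ((nk - k + 1 : ℕ) : ℝ) * (L + 1) := by
        rw [Finset.sum_const, Finset.card_range, nsmul_eq_mul]
    _ ≤ ((nk : ℝ) + 1) * (L + 1) := by
        apply mul_le_mul_of_nonneg_right _ (by linarith)
        have : nk - k + 1 ≤ nk + 1 := by omega
        exact_mod_cast this
    _ ≤ ((nk : ℝ) + 1) * (M ^ 2 * k * ((nl : ℝ) / nk + 1) + 1) := by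
        apply mul_le_mul_of_nonneg_left _ (by linarith)
        have hkpos : (0:ℝ) ≤ k := Nat.cast_nonneg k
        have hM2 : (1:ℝ) ≤ M ^ 2 := by nlinarith
        have : (k:ℝ) ≤ M ^ 2 * k := by nlinarith
        rw [hLdef]
        have : M ^ 2 * k * ((nl : ℝ) / nk + 1) = M ^ 2 * k * nl / nk + M ^ 2 * k := by ring
        rw [this]
        linarith [hkpos, hM2, (by nlinarith : (k:ℝ) ≤ M ^ 2 * k)]
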